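/- Let G be a non-abelian finite p-group and V a complex representation of G on which the center of G acts faithfully. Then V contains an irreducible G-subrepresentation whose dimension is divisible by p. -/

import Mathlib

/-- Let `G` be a non-abelian finite `p`-group and `V` a finite-dimensional complex
representation of `G` on which the center of `G` acts faithfully. Then `V` contains an
irreducible `G`-subrepresentation whose dimension is divisible by `p`. -/
theorem stmt5 (p : ℕ) (hp : p.Prime) (G : Type*) [Group G] [Finite G] (hG : IsPGroup p G)
    (hna : ¬ ∀ a b : G, a * b = b * a)
    (V : Type*) [AddCommGroup V] [Module ℂ V] [FiniteDimensional ℂ V]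
    (ρ : Representation ℂ G V)
    (hZ : ∀ z ∈ Subgroup.center G, (∀ v : V, ρ z v = v) → z = 1) :
    ∃ W : Submodule ℂ V,
      (∀ (g : G), ∀ v ∈ W, ρ g v ∈ W) ∧ W ≠ ⊥ ∧
      (∀ U : Submodule ℂ V, U ≤ W → (∀ (g : G), ∀ v ∈ U, ρ g v ∈ U) → U = ⊥ ∨ U = W) ∧
      p ∣ Module.finrank ℂ W := by
  classical
  letI : Bracket G G := commutatorElement
  haveI : Fact p.Prime := ⟨hp⟩
  push_neg at hna
  obtain ⟨a, b, hab⟩ := hna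
  haveI : Nontrivial G := ⟨a * b, b * a, hab⟩
  -- the commutator subgroup is nontrivial
  have hc : ⁅a, b⁆ ∈ commutator G :=
    Subgroup.commutator_mem_commutator (Subgroup.mem_top a) (Subgroup.mem_top b)
  have hc1 : ⁅a, b⁆ ≠ 1 := by
    intro h
    exact hab (commutatorElement_eq_one_iff_mul_comm.mp h)
  haveI : Nontrivial (commutator G) :=
    ⟨⟨⁅a, b⁆, hc⟩, 1, fun h => hc1 (by simpa using congrArg Subtype.val h)⟩
  -- p divides the cardinality of the commutator subgroup
  have hPG : IsPGroup p (commutator G) := hG.to_subgroup _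
  obtain ⟨k0, hk0⟩ := (IsPGroup.iff_card (p := p) (G := commutator G)).mp hPG
  have hk0pos : k0 ≠ 0 := by
    intro h
    rw [h, pow_zero] at hk0
    exact (Finite.one_lt_card (α := commutator G)).ne' hk0
  have hdvd : p ∣ Nat.card (commutator G) := hk0 ▸ dvd_pow_self p hk0pos
  -- there is a nontrivial element of the commutator subgroup fixed by conjugation
  have hCG : IsPGroup p (ConjAct G) := hG.of_equiv ConjAct.toConjAct
  have hone : (1 : commutator G) ∈ MulAction.fixedPoints (ConjAct G) (commutator G) := by
    intro g
    ext
    rw [ConjAct.Subgroup.val_conj_smul, ConjAct.smul_def]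
    simp
  obtain ⟨z₀, hz₀fix, hz₀ne⟩ :=
    hCG.exists_fixed_point_of_prime_dvd_card_of_fixed_point (α := commutator G) hdvd hone
  set z : G := (z₀ : G) with hzdef
  have hzne : z ≠ 1 := by
    intro h
    exact hz₀ne (Subtype.ext h.symm)
  -- z is central
  have hzc : z ∈ Subgroup.center G := by
    rw [Subgroup.mem_center_iff]
    intro g
    have h1 := hz₀fix (ConjAct.toConjAct g)
    have h2 : g * z * g⁻¹ = z := by
      have h3 := congrArg Subtype.val h1
      rw [ConjAct.Subgroup.val_conj_smul, ConjAct.smul_def] at h3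
      simpa using h3
    calc g * z = g * z * g⁻¹ * g := by group
      _ = z * g := by rw [h2]
  set f : Module.End ℂ V := ρ z with hfdef
  have hfne : ¬ ∀ v : V, f v = v := fun h => hzne (hZ z hzc h)
  -- f has p-power order
  obtain ⟨k, hk⟩ := hG z
  set N : ℕ := p ^ k with hNdef
  have hN0 : N ≠ 0 := pow_ne_zero k hp.pos.ne'
  have hfN : f ^ N = 1 := by rw [hfdef, ← map_pow, hk, map_one]
  -- f is semisimple
  have hsep : (Polynomial.X ^ N - Polynomial.C (1 : ℂ)).Separable := by
    have := Polynomial.separable_X_pow_sub_C_unit (R := ℂ) 1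
      (isUnit_iff_ne_zero.mpr (Nat.cast_ne_zero.mpr hN0))
    simpa using this
  have hss : f.IsSemisimple := by
    apply Module.End.isSemisimple_of_squarefree_aeval_eq_zero hsep.squarefree
    rw [map_sub, Polynomial.aeval_X_pow, Polynomial.aeval_C, hfN]
    simp
  have hfs := hss.isFinitelySemisimple
  -- the eigenspaces of f span V
  have htop : ⨆ μ : ℂ, f.eigenspace μ = ⊤ := by
    have h1 := Module.End.iSup_maxGenEigenspace_eq_top f
    simp_rw [hfs.maxGenEigenspace_eq_eigenspace] at h1
    exact h1
  -- there is an eigenvalue μ ≠ 1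
  obtain ⟨μ, hμ1, hEne⟩ : ∃ μ : ℂ, μ ≠ 1 ∧ f.eigenspace μ ≠ ⊥ := by
    by_contra h
    push_neg at h
    have h2 : (⊤ : Submodule ℂ V) ≤ f.eigenspace 1 := by
      rw [← htop]
      refine iSup_le fun μ => ?_
      by_cases hμ : μ = 1
      · subst hμ; exact le_rfl
      · rw [h μ hμ]; exact bot_le
    exact hfne fun v => by
      have := h2 (Submodule.mem_top (x := v))
      rw [Module.End.mem_eigenspace_iff] at this
      simpa using this
  set E : Submodule ℂ V := f.eigenspace μ with hEdef
  have hfE : ∀ v ∈ E, f v = μ • v := fun v hv => Module.End.mem_eigenspace_iff.mp hv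
  -- μ ^ N = 1
  obtain ⟨v, hv, hv0⟩ := Submodule.exists_mem_ne_zero_of_ne_bot hEne
  have hpow : ∀ m : ℕ, (f ^ m) v = μ ^ m • v := by
    intro m
    induction m with
    | zero => simp
    | succ n ih =>
      rw [pow_succ, Module.End.mul_apply, hfE v hv, map_smul, ih, smul_smul, pow_succ,
        mul_comm]
  have hμN : μ ^ N = 1 := by
    have h1 : (f ^ N) v = v := by rw [hfN]; rfl
    rw [hpow N] at h1
    by_contra h
    have h2 : (μ ^ N - 1) • v = 0 := by rw [sub_smul, one_smul, h1, sub_self]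
    rcases smul_eq_zero.mp h2 with h3 | h3
    · exact h (by linear_combination h3)
    · exact hv0 h3
  -- E is G-invariant
  have hcomm : ∀ g : G, f * ρ g = ρ g * f := fun g => by
    rw [hfdef, ← map_mul, ← map_mul, (Subgroup.mem_center_iff.mp hzc g).symm]
  have hEinv : ∀ g : G, ∀ w ∈ E, ρ g w ∈ E := by
    intro g w hw
    rw [hEdef, Module.End.mem_eigenspace_iff]
    have h1 : f (ρ g w) = ρ g (f w) := by
      have := congrArg (fun F : Module.End ℂ V => F w) (hcomm g)
      simpa [Module.End.mul_apply] using this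
    rw [h1, hfE w hw, map_smul]
  -- choose a minimal nonzero invariant subspace of E
  have hP : ∃ n : ℕ, ∃ U : Submodule ℂ V,
      U ≤ E ∧ U ≠ ⊥ ∧ (∀ g : G, ∀ w ∈ U, ρ g w ∈ U) ∧ Module.finrank ℂ U = n :=
    ⟨Module.finrank ℂ E, E, le_rfl, hEne, hEinv, rfl⟩
  obtain ⟨W, hWE, hWne, hWinv, hWrank⟩ := Nat.find_spec hP
  refine ⟨W, hWinv, hWne, ?_, ?_⟩
  · intro U hU hUinv
    by_cases h0 : U = ⊥
    · exact Or.inl h0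
    · refine Or.inr (Submodule.eq_of_le_of_finrank_le hU ?_)
      rw [hWrank]
      exact Nat.find_min' hP ⟨U, hU.trans hWE, h0, hUinv, rfl⟩
  · -- the determinant argument
    set r : G → Module.End ℂ W := fun g => (ρ g).restrict (hWinv g) with hrdef
    have hr_one : r 1 = 1 := by
      ext x
      simp [hrdef, LinearMap.restrict_apply]
    have hr_mul : ∀ g h : G, r (g * h) = r g * r h := by
      intro g h
      ext x
      simp [hrdef, LinearMap.restrict_apply, Module.End.mul_apply]
    set rM : G →* Module.End ℂ W := ⟨⟨r, hr_one⟩, hr_mul⟩ with hrMdef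
    set δ : G →* ℂ := (LinearMap.det : Module.End ℂ W →* ℂ).comp rM with hδdef
    have hzcomm : z ∈ commutator G := z₀.2
    have hker : δ.toHomUnits z = 1 :=
      Abelianization.commutator_subset_ker δ.toHomUnits hzcomm
    have hδz : δ z = 1 := by
      have := congrArg (Units.val) hker
      rwa [MonoidHom.coe_toHomUnits] at this
    have hrz : r z = μ • (1 : Module.End ℂ W) := by
      ext x
      simpa [hrdef, LinearMap.restrict_apply] using hfE (x : V) (hWE x.2)
    have hdet : δ z = μ ^ Module.finrank ℂ W := by
      rw [hδdef]
      show LinearMap.det (r z) = _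
      rw [hrz, LinearMap.det_smul, map_one LinearMap.det, mul_one]
    have hμd : μ ^ Module.finrank ℂ W = 1 := by rw [← hdet, hδz]
    by_contra hpd
    have hco : (Nat.gcd (Module.finrank ℂ W) N) = 1 := by
      have h1 : p.Coprime (Module.finrank ℂ W) := hp.coprime_iff_not_dvd.mpr hpd
      have h2 : (p ^ k).Coprime (Module.finrank ℂ W) := h1.pow_left k
      exact (Nat.coprime_comm.mp h2)
    have ho1 : orderOf μ ∣ Module.finrank ℂ W := orderOf_dvd_of_pow_eq_one hμd
    have ho2 : orderOf μ ∣ N := orderOf_dvd_of_pow_eq_one hμN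
    have : orderOf μ ∣ 1 := hco ▸ Nat.dvd_gcd ho1 ho2
    exact hμ1 (orderOf_eq_one_iff.mp (Nat.dvd_one.mp this))
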